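/- For every finite deterministic parity automaton A over the alphabet {0,1} × {0,1} × {0,1} defining the relation R_A on triples of ω-sequences, and for every P ⊆ ℕ, either there is a causal operator F : (ℕ → Bool) → (ℕ → Bool) such that (X, F X, χ_P) ∈ R_A for every X, or there is a strongly causal operator G : (ℕ → Bool) → (ℕ → Bool) such that (G Y, Y, χ_P) ∉ R_A for every Y. -/

import Mathlib

namespace MD

variable {V : Type}

/-- position after reading the first `n` bits of `c`, starting at `v`. -/
def pos (move : V → Bool → V) (v : V) (c : ℕ → Bool) : ℕ → V
  | 0 => v
  | n+1 => move (pos move v c n) (c n)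

def hist (c : ℕ → Bool) (n : ℕ) : List Bool := (List.range n).map c

abbrev Strat := List Bool → Bool

theorem hist_length {c : ℕ → Bool} {n : ℕ} : (hist c n).length = n := by
  simp [hist]

theorem hist_getD {c : ℕ → Bool} {n i : ℕ} (h : i < n) : (hist c n).getD i false = c i := by
  simp [hist, List.getD, List.getElem?_map, h]

theorem pos_congr (move : V → Bool → V) (v : V) {c d : ℕ → Bool} :
    ∀ n, (∀ i < n, c i = d i) → pos move v c n = pos move v d n := by
  intro n
  induction n with
  | zero => intro _; rfl
  | succ n ih =>
    intro h
    simp only [pos, ih (fun i hi => h i (Nat.lt_succ_of_lt hi)), h n (Nat.lt_succ_self n)]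

theorem pos_shift (move : V → Bool → V) (v : V) (c : ℕ → Bool) (k : ℕ) :
    ∀ n, pos move (pos move v c k) (fun m => c (k + m)) n = pos move v c (k + n) := by
  intro n
  induction n with
  | zero => rfl
  | succ n ih =>
    rw [Nat.add_succ]
    show move (pos move (pos move v c k) (fun m => c (k + m)) n) (c (k + n)) =
      move (pos move v c (k + n)) (c (k + n))
    rw [ih]

theorem hist_drop (c : ℕ → Bool) (k n : ℕ) :
    (hist c (k + n)).drop k = hist (fun m => c (k + m)) n := by
  have : hist c (k + n) = hist c k ++ (List.range n).map (fun m => c (k + m)) := by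
    simp [hist, List.range_add, List.map_map]
  rw [this]
  have : List.drop (hist c k).length (hist c k ++ (List.range n).map (fun m => c (k + m))) =
      (List.range n).map (fun m => c (k + m)) := List.drop_left
  rw [hist_length] at this
  rw [this]
  rfl

/-- position read off a finite history list. -/
def posL (move : V → Bool → V) (v : V) (l : List Bool) (k : ℕ) : V :=
  pos move v (fun i => l.getD i false) k

theorem posL_hist (move : V → Bool → V) (v : V) (c : ℕ → Bool) {k n : ℕ} (h : k ≤ n) :
    posL move v (hist c n) k = pos move v c k := by
  apply pos_congr
  intro i hi
  exact hist_getD (lt_of_lt_of_le hi h)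

/-- shifting preserves infinitude of occurrence sets -/
theorem infinite_shift (P : ℕ → Prop) (k : ℕ) :
    {n | P (k + n)}.Infinite ↔ {n | P n}.Infinite := by
  constructor
  · intro h
    have : ((· + k) '' {n | P (k + n)}) ⊆ {n | P n} := by
      rintro _ ⟨m, hm, rfl⟩
      simpa [Nat.add_comm] using hm
    exact Set.Infinite.mono this (h.image (Set.injOn_of_injective (add_left_injective k)))
  · intro h
    have h2 : ({n | P n} \ {n | n < k}).Infinite := h.diff (Set.finite_Iio k)
    have : ((· + k) '' {n | P (k + n)}) = ({n | P n} \ {n | n < k}) := by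
      ext m
      constructor
      · rintro ⟨j, hj, rfl⟩
        exact ⟨by simpa [Nat.add_comm] using hj, by simp⟩
      · rintro ⟨h1, h2⟩
        simp only [Set.mem_setOf_eq, not_lt] at h2
        exact ⟨m - k, by simpa [Nat.add_sub_cancel' h2] using h1, by show m - k + k = m; omega⟩
    rw [← this] at h2
    exact Set.Infinite.of_image _ h2

variable (prio : V → ℕ)

noncomputable def minInf (f : ℕ → V) : ℕ := sInf {k | {n | prio (f n) = k}.Infinite}

def Pay (b : Bool) (f : ℕ → V) : Prop := Even (minInf prio f) ↔ b = true

theorem minInf_shift (f : ℕ → V) (k : ℕ) : minInf prio (fun m => f (k + m)) = minInf prio f := by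
  unfold minInf
  congr 1
  ext j
  exact infinite_shift (fun n => prio (f n) = j) k

theorem Pay_shift {b : Bool} {f : ℕ → V} (k : ℕ) (h : Pay prio b (fun m => f (k + m))) :
    Pay prio b f := by
  unfold Pay at *
  rwa [minInf_shift] at h

section Game

variable {V : Type} (turn : V → Bool) (move : V → Bool → V)

/-- consistency of the play `c` with strategy `σ` (for player `b`) up to time `N` (exclusive). -/
def ConsUp (b : Bool) (v : V) (σ : Strat) (c : ℕ → Bool) (N : ℕ) : Prop :=
  ∀ n < N, turn (pos move v c n) = b → c n = σ (hist c n)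

def Cons (b : Bool) (v : V) (σ : Strat) (c : ℕ → Bool) : Prop :=
  ∀ n, turn (pos move v c n) = b → c n = σ (hist c n)

theorem Cons.consUp {b v σ c} (h : Cons turn move b v σ c) (N : ℕ) :
    ConsUp turn move b v σ c N := fun n _ => h n

def Safe (b : Bool) (U : Set V) (v : V) (σ : Strat) : Prop :=
  ∀ c n, ConsUp turn move b v σ c (n+1) → (∀ k ≤ n, pos move v c k ∈ U) →
    turn (pos move v c n) = b → pos move v c (n+1) ∈ U

variable (prio : V → ℕ)

def Win (b : Bool) (U : Set V) (v : V) : Prop :=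
  v ∈ U ∧ ∃ σ, Safe turn move b U v σ ∧
    ∀ c, Cons turn move b v σ c → (∀ n, pos move v c n ∈ U) → Pay prio b (pos move v c)

def Subarena (U : Set V) : Prop := ∀ v ∈ U, ∃ m, move v m ∈ U

/-- finite stages of the attractor of `T` for player `b` inside `U`. -/
def AttrN (b : Bool) (U T : Set V) : ℕ → Set V
  | 0 => ∅
  | n+1 => AttrN b U T n ∪ {v | v ∈ U ∧ (v ∈ T ∨
      (if turn v = b then ∃ m, move v m ∈ AttrN b U T n
       else ∀ m, move v m ∈ U → move v m ∈ AttrN b U T n))}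

def Attr (b : Bool) (U T : Set V) : Set V := ⋃ n, AttrN turn move b U T n

variable {turn move}

theorem attrN_mono {b : Bool} {U T : Set V} : ∀ {m n : ℕ}, m ≤ n →
    AttrN turn move b U T m ⊆ AttrN turn move b U T n := by
  intro m n h
  induction n with
  | zero => simp_all
  | succ n ih =>
    rcases Nat.lt_or_ge m (n+1) with h' | h'
    · exact (ih (Nat.lt_succ_iff.mp h')).trans (Set.subset_union_left)
    · have : m = n + 1 := le_antisymm h h'
      subst this; rfl

theorem attrN_subU {b : Bool} {U T : Set V} : ∀ {n : ℕ}, AttrN turn move b U T n ⊆ U := by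
  intro n
  induction n with
  | zero => simp [AttrN]
  | succ n ih =>
    rintro v (hv | hv)
    · exact ih hv
    · exact hv.1

theorem attr_subU {b : Bool} {U T : Set V} : Attr turn move b U T ⊆ U := by
  rintro v hv
  rcases Set.mem_iUnion.mp hv with ⟨n, hn⟩
  exact attrN_subU hn

theorem mem_attrN_one {b : Bool} {U T : Set V} {v : V} (hU : v ∈ U) (hT : v ∈ T) :
    v ∈ AttrN turn move b U T 1 := Or.inr ⟨hU, Or.inl hT⟩

theorem mem_attr_of_T {b : Bool} {U T : Set V} {v : V} (hU : v ∈ U) (hT : v ∈ T) :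
    v ∈ Attr turn move b U T := Set.mem_iUnion.mpr ⟨1, mem_attrN_one hU hT⟩

theorem attrN_succ_own {b : Bool} {U T : Set V} {v : V} {n : ℕ}
    (hv : v ∈ AttrN turn move b U T (n+1)) (hvT : v ∉ T) (ht : turn v = b) :
    ∃ m, move v m ∈ AttrN turn move b U T n := by
  induction n with
  | zero =>
    rcases hv with hv | ⟨_, hv | hv⟩
    · simp [AttrN] at hv
    · exact absurd hv hvT
    · rw [if_pos ht] at hv; exact hv
  | succ n ih =>
    rcases hv with hv | ⟨_, hv | hv⟩
    · rcases ih hv with ⟨m, hm⟩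
      exact ⟨m, attrN_mono (Nat.le_succ n) hm⟩
    · exact absurd hv hvT
    · rw [if_pos ht] at hv; exact hv

theorem attrN_succ_opp {b : Bool} {U T : Set V} {v : V} {n : ℕ}
    (hv : v ∈ AttrN turn move b U T (n+1)) (hvT : v ∉ T) (ht : turn v ≠ b) :
    ∀ m, move v m ∈ U → move v m ∈ AttrN turn move b U T n := by
  induction n with
  | zero =>
    rcases hv with hv | ⟨_, hv | hv⟩
    · simp [AttrN] at hv
    · exact absurd hv hvT
    · rw [if_neg ht] at hv
      intro m hm
      exact absurd (hv m hm) (by simp [AttrN])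
  | succ n ih =>
    rcases hv with hv | ⟨_, hv | hv⟩
    · exact fun m hm => attrN_mono (Nat.le_succ n) (ih hv m hm)
    · exact absurd hv hvT
    · rw [if_neg ht] at hv; exact hv

/-- complement of the attractor: player b cannot escape it (staying in U). -/
theorem compl_attr_own {b : Bool} {U T : Set V} {v : V}
    (hv : v ∈ U) (hva : v ∉ Attr turn move b U T) (ht : turn v = b) :
    ∀ m, move v m ∈ U → move v m ∉ Attr turn move b U T := by
  intro m hmU hma
  rcases Set.mem_iUnion.mp hma with ⟨n, hn⟩
  exact hva (Set.mem_iUnion.mpr ⟨n+1, Or.inr ⟨hv, Or.inr (by rw [if_pos ht]; exact ⟨m, hn⟩)⟩⟩)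

theorem compl_attr_notT {b : Bool} {U T : Set V} {v : V}
    (hv : v ∈ U) (hva : v ∉ Attr turn move b U T) : v ∉ T :=
  fun hT => hva (mem_attr_of_T hv hT)

/-- complement of the attractor is a subarena (needs finite branching: moves are Bool). -/
theorem compl_attr_opp {b : Bool} {U T : Set V} {v : V}
    (hv : v ∈ U) (hva : v ∉ Attr turn move b U T) (ht : turn v ≠ b)
    (hsub : Subarena move U) :
    ∃ m, move v m ∈ U ∧ move v m ∉ Attr turn move b U T := by
  by_contra hcon
  push_neg at hcon
  apply hva
  -- each U-move lands in the attractor; take a stage beyond both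
  have key : ∃ N, ∀ m, move v m ∈ U → move v m ∈ AttrN turn move b U T N := by
    by_cases hf : move v false ∈ U <;> by_cases htr : move v true ∈ U
    · rcases Set.mem_iUnion.mp (hcon false hf) with ⟨n1, h1⟩
      rcases Set.mem_iUnion.mp (hcon true htr) with ⟨n2, h2⟩
      refine ⟨max n1 n2, fun m hm => ?_⟩
      cases m
      · exact attrN_mono (le_max_left n1 n2) h1
      · exact attrN_mono (le_max_right n1 n2) h2
    · rcases Set.mem_iUnion.mp (hcon false hf) with ⟨n1, h1⟩
      refine ⟨n1, fun m hm => ?_⟩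
      cases m
      · exact h1
      · exact absurd hm htr
    · rcases Set.mem_iUnion.mp (hcon true htr) with ⟨n2, h2⟩
      refine ⟨n2, fun m hm => ?_⟩
      cases m
      · exact absurd hm hf
      · exact h2
    · rcases hsub v hv with ⟨m, hm⟩
      cases m
      · exact absurd hm hf
      · exact absurd hm htr
  rcases key with ⟨N, hN⟩
  exact Set.mem_iUnion.mpr ⟨N+1, Or.inr ⟨hv, Or.inr (by rw [if_neg ht]; exact hN)⟩⟩

open Classical in
/-- default bit keeping the play inside `U`, when possible. -/
noncomputable def stayBit (U : Set V) (v : V) : Bool :=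
  if h : ∃ m, move v m ∈ U then h.choose else false

theorem stayBit_mem {U : Set V} {v : V} (hsub : Subarena move U) (hv : v ∈ U) :
    move v (stayBit (move := move) U v) ∈ U := by
  unfold stayBit
  rcases hsub v hv with ⟨m, hm⟩
  rw [dif_pos ⟨m, hm⟩]
  exact (Exists.choose_spec (⟨m, hm⟩ : ∃ m, move v m ∈ U))

open Classical in
/-- attractor bit: move to a minimal attractor stage if possible, else stay in U. -/
noncomputable def abit (b : Bool) (U T : Set V) (v : V) : Bool :=
  if h : ∃ n, ∃ m, move v m ∈ AttrN turn move b U T n then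
    (Nat.sInf_mem (⟨h.choose, h.choose_spec⟩ : {n | ∃ m, move v m ∈ AttrN turn move b U T n}.Nonempty)).choose
  else stayBit (move := move) U v

theorem abit_mem_U {b : Bool} {U T : Set V} {v : V} (hsub : Subarena move U) (hv : v ∈ U) :
    move v (abit (turn := turn) (move := move) b U T v) ∈ U := by
  unfold abit
  split
  · next h =>
    exact attrN_subU (Nat.sInf_mem (⟨h.choose, h.choose_spec⟩ :
      {n | ∃ m, move v m ∈ AttrN turn move b U T n}.Nonempty)).choose_spec
  · exact stayBit_mem hsub hv

theorem abit_step {b : Bool} {U T : Set V} {v : V} {n : ℕ}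
    (hv : v ∈ AttrN turn move b U T (n+1)) (hvT : v ∉ T) (ht : turn v = b) :
    move v (abit (turn := turn) (move := move) b U T v) ∈ AttrN turn move b U T n := by
  rcases attrN_succ_own hv hvT ht with ⟨m, hm⟩
  unfold abit
  rw [dif_pos ⟨n, m, hm⟩]
  set S : Set ℕ := {k | ∃ m, move v m ∈ AttrN turn move b U T k} with hS
  have hne : S.Nonempty := ⟨n, m, hm⟩
  have h1 := (Nat.sInf_mem hne).choose_spec
  have h2 : sInf S ≤ n := Nat.sInf_le ⟨m, hm⟩
  exact attrN_mono h2 h1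

end Game

section Reach

variable {V : Type} {turn : V → Bool} {move : V → Bool → V}

/-- if `v` is in the attractor and player `b` plays `abit` until `T` is first
reached, then `T` is reached (along plays staying in `U`). -/
theorem attr_reach {b : Bool} {U T : Set V} :
    ∀ (n : ℕ) (v : V), v ∈ AttrN turn move b U T n → ∀ c : ℕ → Bool,
    (∀ k, pos move v c k ∈ U) →
    (∀ k, (∀ j ≤ k, pos move v c j ∉ T) → pos move v c k ∈ Attr turn move b U T →
      turn (pos move v c k) = b → c k = abit (turn := turn) (move := move) b U T (pos move v c k)) →
    ∃ k, pos move v c k ∈ T := by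
  intro n
  induction n with
  | zero => intro v hv; simp [AttrN] at hv
  | succ n ih =>
    intro v hv c hU hcons
    by_cases hvT : v ∈ T
    · exact ⟨0, hvT⟩
    -- step to a position in AttrN n
    have hstep : pos move v c 1 ∈ AttrN turn move b U T n := by
      by_cases ht : turn v = b
      · have hc0 : c 0 = abit (turn := turn) (move := move) b U T v := by
          have := hcons 0 (fun j hj => by simpa [Nat.le_zero.mp hj, pos] using hvT)
            (Set.mem_iUnion.mpr ⟨n+1, hv⟩) (by simpa [pos] using ht)
          simpa [pos] using this
        show move (pos move v c 0) (c 0) ∈ _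
        rw [show pos move v c 0 = v from rfl, hc0]
        exact abit_step hv hvT ht
      · exact attrN_succ_opp hv hvT ht (c 0) (by simpa [pos] using hU 1)
    -- apply IH to the shifted play
    have hshift : ∀ k, pos move (pos move v c 1) (fun m => c (1 + m)) k = pos move v c (1 + k) :=
      pos_shift move v c 1
    rcases ih (pos move v c 1) hstep (fun m => c (1 + m))
      (fun k => by rw [hshift k]; exact hU (1+k))
      (fun k hk hattr hturn => by
        rw [hshift k] at hattr hturn ⊢
        have hnoT : ∀ j ≤ 1 + k, pos move v c j ∉ T := by
          intro j hj
          match j with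
          | 0 => simpa [pos] using hvT
          | j+1 =>
            have := hk j (by omega)
            rwa [hshift j, Nat.add_comm 1 j] at this
          
        exact hcons (1+k) hnoT hattr hturn) with ⟨k, hk⟩
    exact ⟨1 + k, by rw [← hshift k]; exact hk⟩

end Reach

section Switch

variable {V : Type} {turn : V → Bool} {move : V → Bool → V} {prio : V → ℕ}

open Classical in
/-- a chosen winning strategy for `b` from `w` in `U` (junk if none exists). -/
noncomputable def wstrat (turn : V → Bool) (move : V → Bool → V) (prio : V → ℕ)
    (b : Bool) (U : Set V) (w : V) : Strat :=
  if h : Win turn move prio b U w then h.2.choose else fun _ => false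

theorem wstrat_spec {b : Bool} {U : Set V} {w : V} (h : Win turn move prio b U w) :
    Safe turn move b U w (wstrat turn move prio b U w) ∧
    ∀ c, Cons turn move b w (wstrat turn move prio b U w) c →
      (∀ n, pos move w c n ∈ U) → Pay prio b (pos move w c) := by
  unfold wstrat
  rw [dif_pos h]
  exact h.2.choose_spec

open Classical in
/-- play `σ₀` until the first visit to `T`, then delegate to `σT` of the entry point. -/
noncomputable def switchStrat (move : V → Bool → V) (v : V) (T : Set V)
    (σ₀ : Strat) (σT : V → Strat) : Strat := fun l =>
  if h : ∃ k, k ≤ l.length ∧ posL move v l k ∈ T then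
    σT (posL move v l (sInf {k | k ≤ l.length ∧ posL move v l k ∈ T}))
       (l.drop (sInf {k | k ≤ l.length ∧ posL move v l k ∈ T}))
  else σ₀ l

theorem switch_no {v : V} {T : Set V} {σ₀ : Strat} {σT : V → Strat} {c : ℕ → Bool} {n : ℕ}
    (h : ∀ j ≤ n, pos move v c j ∉ T) :
    switchStrat move v T σ₀ σT (hist c n) = σ₀ (hist c n) := by
  unfold switchStrat
  rw [dif_neg]
  rintro ⟨k, hk1, hk2⟩
  rw [hist_length] at hk1
  rw [posL_hist move v c hk1] at hk2
  exact h k hk1 hk2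

theorem switch_yes {v : V} {T : Set V} {σ₀ : Strat} {σT : V → Strat} {c : ℕ → Bool}
    {k n : ℕ} (hk : pos move v c k ∈ T) (hmin : ∀ j < k, pos move v c j ∉ T) (hkn : k ≤ n) :
    switchStrat move v T σ₀ σT (hist c n) =
      σT (pos move v c k) (hist (fun m => c (k + m)) (n - k)) := by
  unfold switchStrat
  rw [show (hist c n).length = n from hist_length]
  have hex : ∃ j, j ≤ n ∧ posL move v (hist c n) j ∈ T := by
    refine ⟨k, hkn, ?_⟩
    rw [posL_hist move v c hkn]; exact hk
  rw [dif_pos hex]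
  have hSeq : sInf {j | j ≤ n ∧ posL move v (hist c n) j ∈ T} = k := by
    apply le_antisymm
    · exact Nat.sInf_le ⟨hkn, by rw [posL_hist move v c hkn]; exact hk⟩
    · by_contra hcon
      push_neg at hcon
      have hmem := Nat.sInf_mem (⟨k, hkn,
        by rw [posL_hist move v c hkn]; exact hk⟩ :
        {j | j ≤ n ∧ posL move v (hist c n) j ∈ T}.Nonempty)
      rcases hmem with ⟨h1, h2⟩
      rw [posL_hist move v c h1] at h2
      exact hmin _ hcon h2
  rw [hSeq, posL_hist move v c hkn]
  have h3 := hist_drop c k (n - k)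
  rw [show k + (n - k) = n by omega] at h3
  rw [h3]

/-- the master switching lemma: if every vertex of `T` is winning for `b`, the
pre-`T` phase keeps the play in `U`, and plays avoiding `T` forever are won,
then `v` is winning for `b`. -/
theorem switch_win {b : Bool} {U T : Set V} {v : V} {σ₀ : Strat}
    (hvU : v ∈ U)
    (hT : ∀ w ∈ T, Win turn move prio b U w)
    (H1 : ∀ c n, ConsUp turn move b v (switchStrat move v T σ₀ (wstrat turn move prio b U)) c (n+1) →
      (∀ k ≤ n, pos move v c k ∈ U) → (∀ k ≤ n, pos move v c k ∉ T) →
      turn (pos move v c n) = b → pos move v c (n+1) ∈ U)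
    (H2 : ∀ c, Cons turn move b v (switchStrat move v T σ₀ (wstrat turn move prio b U)) c →
      (∀ n, pos move v c n ∈ U) → (∀ n, pos move v c n ∉ T) → Pay prio b (pos move v c)) :
    Win turn move prio b U v := by
  classical
  set σs := switchStrat move v T σ₀ (wstrat turn move prio b U) with hσs
  refine ⟨hvU, σs, ?_, ?_⟩
  · -- safety
    intro c n hcons hU hturn
    by_cases hhit : ∃ k, k ≤ n ∧ pos move v c k ∈ T
    · set S := {k | pos move v c k ∈ T} with hS
      have hSne : S.Nonempty := ⟨hhit.choose, hhit.choose_spec.2⟩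
      set k₀ := sInf S with hk₀
      have hk₀T : pos move v c k₀ ∈ T := Nat.sInf_mem hSne
      have hk₀min : ∀ j < k₀, pos move v c j ∉ T := fun j hj hjT =>
        Nat.notMem_of_lt_sInf hj hjT
      have hk₀n : k₀ ≤ n := le_trans (Nat.sInf_le hhit.choose_spec.2) hhit.choose_spec.1
      set w := pos move v c k₀ with hw
      set c' := fun m => c (k₀ + m) with hc'
      have hsh : ∀ t, pos move w c' t = pos move v c (k₀ + t) := pos_shift move v c k₀
      have hwin := wstrat_spec (turn := turn) (move := move) (prio := prio) (hT w hk₀T)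
      -- tail consistency up to n - k₀ + 1
      have htail : ConsUp turn move b w (wstrat turn move prio b U w) c' (n - k₀ + 1) := by
        intro t ht hturn'
        rw [hsh t] at hturn'
        have h1 : k₀ + t < n + 1 := by omega
        have h2 := hcons (k₀ + t) h1 hturn'
        rw [hσs] at h2
        rw [show c' t = c (k₀ + t) from rfl, h2,
          switch_yes (σ₀ := σ₀) hk₀T hk₀min (by omega : k₀ ≤ k₀ + t),
          show k₀ + t - k₀ = t by omega, ← hc']
      have := hwin.1 c' (n - k₀) htail
        (fun t ht => by rw [hsh t]; exact hU (k₀ + t) (by omega))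
        (by rw [hsh (n - k₀), show k₀ + (n - k₀) = n by omega]; exact hturn)
      rw [hsh (n - k₀ + 1), show k₀ + (n - k₀ + 1) = n + 1 by omega] at this
      exact this
    · -- no hit so far: use H1
      push_neg at hhit
      exact H1 c n hcons hU (fun k hk => hhit k hk) hturn
  · -- winning
    intro c hcons hU
    by_cases hhit : ∃ k, pos move v c k ∈ T
    · set S := {k | pos move v c k ∈ T} with hS
      have hSne : S.Nonempty := hhit
      set k₀ := sInf S with hk₀
      have hk₀T : pos move v c k₀ ∈ T := Nat.sInf_mem hSne
      have hk₀min : ∀ j < k₀, pos move v c j ∉ T := fun j hj hjT =>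
        Nat.notMem_of_lt_sInf hj hjT
      set w := pos move v c k₀ with hw
      set c' := fun m => c (k₀ + m) with hc'
      have hsh : ∀ t, pos move w c' t = pos move v c (k₀ + t) := pos_shift move v c k₀
      have hwin := wstrat_spec (turn := turn) (move := move) (prio := prio) (hT w hk₀T)
      have htail : Cons turn move b w (wstrat turn move prio b U w) c' := by
        intro t hturn'
        rw [hsh t] at hturn'
        have h2 := hcons (k₀ + t) hturn'
        rw [hσs] at h2
        rw [show c' t = c (k₀ + t) from rfl, h2,
          switch_yes (σ₀ := σ₀) hk₀T hk₀min (by omega : k₀ ≤ k₀ + t),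
          show k₀ + t - k₀ = t by omega, ← hc']
      have hpay := hwin.2 c' htail (fun t => by rw [hsh t]; exact hU (k₀ + t))
      have : pos move w c' = fun m => pos move v c (k₀ + m) := funext hsh
      rw [this] at hpay
      exact Pay_shift prio k₀ hpay
    · push_neg at hhit
      exact H2 c hcons hU hhit

end Switch

section Derived

variable {V : Type} {turn : V → Bool} {move : V → Bool → V} {prio : V → ℕ}

/-- the attractor of a winning region is winning. -/
theorem attr_win {b : Bool} {U T : Set V} (hsub : Subarena move U)
    (hT : ∀ w ∈ T, Win turn move prio b U w) :
    ∀ v ∈ Attr turn move b U T, Win turn move prio b U v := by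
  intro v hv
  have hvU : v ∈ U := attr_subU hv
  refine switch_win (σ₀ := fun l => abit (turn := turn) (move := move) b U T
    (posL move v l l.length)) hvU hT ?_ ?_
  · intro c n hcons hU hnoT hturn
    have hc : c n = abit (turn := turn) (move := move) b U T (pos move v c n) := by
      have h1 := hcons n (Nat.lt_succ_self n) hturn
      rw [switch_no hnoT] at h1
      rw [h1, hist_length, posL_hist move v c (le_refl n)]
    show move (pos move v c n) (c n) ∈ U
    rw [hc]
    exact abit_mem_U hsub (hU n (le_refl n))
  · intro c hcons hU hnoT
    rcases Set.mem_iUnion.mp hv with ⟨n₀, hn₀⟩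
    rcases attr_reach n₀ v hn₀ c hU (fun k hk hattr hturn => by
      have h1 := hcons k hturn
      rw [switch_no hk] at h1
      rw [h1, hist_length, posL_hist move v c (le_refl k)]) with ⟨k, hk⟩
    exact absurd hk (hnoT k)

/-- winning transfers from a trap for the opponent to the full game. -/
theorem win_of_trap {b : Bool} {U' U : Set V} {v : V} (hsub : U' ⊆ U)
    (htrap : ∀ w ∈ U', turn w ≠ b → ∀ m, move w m ∈ U → move w m ∈ U')
    (hwin : Win turn move prio b U' v) : Win turn move prio b U v := by
  rcases hwin with ⟨hvU', σ, hsafe, hwinp⟩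
  have inv : ∀ c n, ConsUp turn move b v σ c n → (∀ k ≤ n, pos move v c k ∈ U) →
      ∀ k ≤ n, pos move v c k ∈ U' := by
    intro c n hcons hU
    have inv2 : ∀ k, k ≤ n → ∀ j ≤ k, pos move v c j ∈ U' := by
      intro k
      induction k with
      | zero => intro _ j hj; rw [Nat.le_zero.mp hj]; exact hvU'
      | succ k ih =>
        intro hk j hj
        rcases Nat.lt_or_ge j (k+1) with hj' | hj'
        · exact ih (by omega) j (by omega)
        · have hjeq : j = k + 1 := by omega
          subst hjeq
          by_cases ht : turn (pos move v c k) = b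
          · exact hsafe c k (fun i hi => hcons i (by omega)) (fun i hi => ih (by omega) i hi) ht
          · exact htrap _ (ih (by omega) k (le_refl k)) ht (c k) (hU (k+1) hk)
    exact fun k hk => inv2 k hk k (le_refl k)
  refine ⟨hsub hvU', σ, ?_, ?_⟩
  · intro c n hcons hU hturn
    have hU' := inv c n (fun j hj hj' => hcons j (by omega) hj') hU
    exact hsub (hsafe c n hcons hU' hturn)
  · intro c hcons hU
    exact hwinp c hcons (fun n => inv c n (fun j _ => hcons j) (fun k _ => hU k) n (le_refl n))

/-- after removing the attractor of `b`'s winning region, `b` wins nowhere. -/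
theorem noWin_in_sub {b : Bool} {U : Set V} (hsub : Subarena move U) :
    ∀ w ∈ U \ Attr turn move b U {u | Win turn move prio b U u},
      ¬ Win turn move prio b (U \ Attr turn move b U {u | Win turn move prio b U u}) w := by
  set Wb := {u | Win turn move prio b U u} with hWb
  set A := Attr turn move b U Wb with hA
  intro w hw hwin
  have hAwin : ∀ u ∈ A, Win turn move prio b U u := attr_win hsub (fun u hu => hu)
  rcases hwin with ⟨hwU₁, σ₀, hsafe₀, hwin₀⟩
  have : Win turn move prio b U w := by
    refine switch_win (σ₀ := σ₀) hw.1 hAwin ?_ ?_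
    · intro c n hcons hU hnoA hturn
      have hcons₀ : ConsUp turn move b w σ₀ c (n+1) := by
        intro j hj hturn'
        have h1 := hcons j hj hturn'
        rwa [switch_no (fun i hi => hnoA i (by omega))] at h1
      have := hsafe₀ c n hcons₀ (fun k hk => ⟨hU k hk, hnoA k hk⟩) hturn
      exact this.1
    · intro c hcons hU hnoA
      have hcons₀ : Cons turn move b w σ₀ c := by
        intro j hturn'
        have h1 := hcons j hturn'
        rwa [switch_no (fun i _ => hnoA i)] at h1
      exact hwin₀ c hcons₀ (fun n => ⟨hU n, hnoA n⟩)
  exact hw.2 (mem_attr_of_T hw.1 this)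

end Derived

section Main

variable {V : Type}

theorem bool_resolve {b i : Bool} (h : b ≠ i) : b = !i := by
  cases b <;> cases i <;> simp_all

theorem findGreatest_congr {P Q : ℕ → Prop} [DecidablePred P] [DecidablePred Q] :
    ∀ {n}, (∀ k, 0 < k → k ≤ n → (P k ↔ Q k)) → Nat.findGreatest P n = Nat.findGreatest Q n := by
  intro n
  induction n with
  | zero => intro _; rfl
  | succ n ih =>
    intro h
    rw [Nat.findGreatest_succ, Nat.findGreatest_succ]
    by_cases hp : P (n+1)
    · rw [if_pos hp, if_pos ((h (n+1) (by omega) (le_refl _)).mp hp)]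
    · rw [if_neg hp, if_neg (fun hq => hp ((h (n+1) (by omega) (le_refl _)).mpr hq)),
        ih (fun k hk hk' => h k hk (by omega))]

theorem win_or (turn : V → Bool) (move : V → Bool → V) (prio : V → ℕ)
    {U : Set V} {v : V} (i : Bool)
    (h : Win turn move prio i U v ∨ Win turn move prio (!i) U v) :
    Win turn move prio true U v ∨ Win turn move prio false U v := by
  cases i
  · exact h.symm
  · exact h

theorem determined (turn : V → Bool) (move : V → Bool → V) (prio : V → ℕ) :
    ∀ (N : ℕ) (U : Set V), Subarena move U → ∀ hfin : (prio '' U).Finite,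
      hfin.toFinset.card ≤ N → ∀ v ∈ U,
      Win turn move prio true U v ∨ Win turn move prio false U v := by
  intro N
  induction N with
  | zero =>
    intro U _ hfin hcard v hv
    exfalso
    have : prio v ∈ hfin.toFinset := hfin.mem_toFinset.mpr ⟨v, hv, rfl⟩
    have := Finset.card_pos.mpr ⟨prio v, this⟩
    omega
  | succ N IH =>
    intro U hsub hfin hcard v hv
    classical
    set p := sInf (prio '' U) with hp
    have hpmem : p ∈ prio '' U := Nat.sInf_mem ⟨prio v, v, hv, rfl⟩
    set i := decide (Even p) with hi
    set j := !i with hj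
    have hiEven : Even p ↔ i = true := by rw [hi]; simp
    set Wj := {u | Win turn move prio j U u} with hWj
    set Aj := Attr turn move j U Wj with hAj
    set U₁ := U \ Aj with hU₁
    by_cases hvW : v ∈ Aj
    · -- v is in the attractor of j's winning region: j wins
      exact win_or turn move prio j (Or.inl (attr_win hsub (fun u hu => hu) v hvW))
    · -- v ∉ Aj : show player i wins from v
      have hv₁ : v ∈ U₁ := ⟨hv, hvW⟩
      have sub₁ : Subarena move U₁ := by
        intro w hw
        by_cases ht : turn w = j
        · rcases hsub w hw.1 with ⟨m, hm⟩
          exact ⟨m, hm, compl_attr_own hw.1 hw.2 ht m hm⟩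
        · rcases compl_attr_opp hw.1 hw.2 ht hsub with ⟨m, hm1, hm2⟩
          exact ⟨m, hm1, hm2⟩
      have hnoj : ∀ w ∈ U₁, ¬ Win turn move prio j U₁ w := noWin_in_sub hsub
      have trap₁ : ∀ w ∈ U₁, turn w ≠ i → ∀ m, move w m ∈ U → move w m ∈ U₁ := by
        intro w hw ht m hm
        have htj : turn w = j := by rw [hj]; exact bool_resolve ht
        exact ⟨hm, compl_attr_own hw.1 hw.2 htj m hm⟩
      set Pp := {w | w ∈ U₁ ∧ prio w = p} with hPp
      set A := Attr turn move i U₁ Pp with hA2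
      set G2 := U₁ \ A with hG2d
      have sub₂ : Subarena move G2 := by
        intro w hw
        by_cases ht : turn w = i
        · rcases sub₁ w hw.1 with ⟨m, hm⟩
          exact ⟨m, hm, compl_attr_own hw.1 hw.2 ht m hm⟩
        · rcases compl_attr_opp hw.1 hw.2 ht sub₁ with ⟨m, hm1, hm2⟩
          exact ⟨m, hm1, hm2⟩
      have trap₂ : ∀ w ∈ G2, turn w ≠ j → ∀ m, move w m ∈ U₁ → move w m ∈ G2 := by
        intro w hw ht m hm
        have hti : turn w = i := by
          have h' := bool_resolve ht
          rw [hj] at h'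
          simpa using h'
        exact ⟨hm, compl_attr_own hw.1 hw.2 hti m hm⟩
      have hG2U : G2 ⊆ U := fun w hw => hw.1.1
      have hfin2 : (prio '' G2).Finite := hfin.subset (Set.image_mono hG2U)
      have hnotp : ∀ w ∈ G2, prio w ≠ p := by
        intro w hw hwp
        exact hw.2 (mem_attr_of_T hw.1 ⟨hw.1, hwp⟩)
      have hcard2 : hfin2.toFinset.card ≤ N := by
        have hsubset : hfin2.toFinset ⊆ hfin.toFinset.erase p := by
          intro k hk
          rcases hfin2.mem_toFinset.mp hk with ⟨w, hw, rfl⟩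
          exact Finset.mem_erase.mpr ⟨hnotp w hw, hfin.mem_toFinset.mpr ⟨w, hG2U hw, rfl⟩⟩
        have h1 := Finset.card_le_card hsubset
        have hpe : p ∈ hfin.toFinset := hfin.mem_toFinset.mpr hpmem
        have h2 := Finset.card_erase_of_mem hpe
        omega
      have hG2i : ∀ w ∈ G2, Win turn move prio i G2 w := by
        intro w hw
        have hdet := IH G2 sub₂ hfin2 hcard2 w hw
        have hdet' : Win turn move prio i G2 w ∨ Win turn move prio (!i) G2 w := by
          cases i
          · exact hdet.symm
          · exact hdet
        rw [← hj] at hdet'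
        rcases hdet' with h | h
        · exact h
        · exact absurd (win_of_trap (fun u hu => hu.1) trap₂ h) (hnoj w hw.1)
      -- the final strategy for i from v in U₁
      set σf : Strat := fun l =>
        if posL move v l l.length ∈ A then
          abit (turn := turn) (move := move) i U₁ Pp (posL move v l l.length)
        else
          wstrat turn move prio i G2
            (posL move v l (Nat.findGreatest (fun k => 0 < k ∧ posL move v l (k-1) ∈ A) l.length))
            (l.drop (Nat.findGreatest (fun k => 0 < k ∧ posL move v l (k-1) ∈ A) l.length))
        with hσf
      have hσf_at : ∀ (c : ℕ → Bool) (n : ℕ),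
          σf (hist c n) = if pos move v c n ∈ A then
              abit (turn := turn) (move := move) i U₁ Pp (pos move v c n)
            else wstrat turn move prio i G2
              (pos move v c (Nat.findGreatest (fun k => 0 < k ∧ pos move v c (k-1) ∈ A) n))
              (hist (fun t => c (Nat.findGreatest (fun k => 0 < k ∧ pos move v c (k-1) ∈ A) n + t))
                (n - Nat.findGreatest (fun k => 0 < k ∧ pos move v c (k-1) ∈ A) n)) := by
        intro c n
        rw [hσf]
        simp only
        rw [show (hist c n).length = n from hist_length, posL_hist move v c (le_refl n)]
        by_cases hA : pos move v c n ∈ A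
        · rw [if_pos hA, if_pos hA]
        · rw [if_neg hA, if_neg hA]
          have hfg : Nat.findGreatest (fun k => 0 < k ∧ posL move v (hist c n) (k-1) ∈ A) n
              = Nat.findGreatest (fun k => 0 < k ∧ pos move v c (k-1) ∈ A) n :=
            findGreatest_congr (fun k hk hk' => by
              rw [posL_hist move v c (by omega : k-1 ≤ n)])
          rw [hfg]
          have hmn : Nat.findGreatest (fun k => 0 < k ∧ pos move v c (k-1) ∈ A) n ≤ n :=
            Nat.findGreatest_le n
          rw [posL_hist move v c hmn]
          have h3 := hist_drop c (Nat.findGreatest (fun k => 0 < k ∧ pos move v c (k-1) ∈ A) n)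
            (n - Nat.findGreatest (fun k => 0 < k ∧ pos move v c (k-1) ∈ A) n)
          rw [show Nat.findGreatest (fun k => 0 < k ∧ pos move v c (k-1) ∈ A) n +
            (n - Nat.findGreatest (fun k => 0 < k ∧ pos move v c (k-1) ∈ A) n) = n by omega] at h3
          rw [h3]
      have hent_eq : ∀ (c : ℕ → Bool) (m n : ℕ), m ≤ n → (m ≠ 0 → pos move v c (m-1) ∈ A) →
          (∀ jj, m ≤ jj → jj < n → pos move v c jj ∉ A) →
          Nat.findGreatest (fun k => 0 < k ∧ pos move v c (k-1) ∈ A) n = m := by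
        intro c m n hmn hm hnone
        rw [Nat.findGreatest_eq_iff]
        refine ⟨hmn, fun hm0 => ⟨Nat.pos_of_ne_zero hm0, hm hm0⟩, ?_⟩
        intro k hk1 hk2 hPk
        exact hnone (k-1) (by omega) (by omega) hPk.2
      have hwin₁ : Win turn move prio i U₁ v := by
        refine ⟨hv₁, σf, ?_, ?_⟩
        · -- safety of σf in U₁
          intro c n hcons hU hturn
          have hc := hcons n (Nat.lt_succ_self n) hturn
          rw [hσf_at c n] at hc
          by_cases hA : pos move v c n ∈ A
          · rw [if_pos hA] at hc
            show move (pos move v c n) (c n) ∈ U₁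
            rw [hc]
            exact abit_mem_U sub₁ (hU n (le_refl n))
          · rw [if_neg hA] at hc
            set m := Nat.findGreatest (fun k => 0 < k ∧ pos move v c (k-1) ∈ A) n with hm
            have hmn : m ≤ n := Nat.findGreatest_le n
            have hfacts := Nat.findGreatest_eq_iff.mp hm.symm
            have hmA : m ≠ 0 → pos move v c (m-1) ∈ A := fun h0 => (hfacts.2.1 h0).2
            have hnoA : ∀ jj, m ≤ jj → jj ≤ n → pos move v c jj ∉ A := by
              intro jj hj1 hj2 hjA
              rcases Nat.lt_or_ge jj n with hlt | hge
              · exact hfacts.2.2 (show m < jj+1 by omega) (by omega)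
                  ⟨by omega, by simpa using hjA⟩
              · have hje : jj = n := by omega
                rw [hje] at hjA; exact hA hjA
            have hjG2 : ∀ jj, m ≤ jj → jj ≤ n → pos move v c jj ∈ G2 :=
              fun jj h1 h2 => ⟨hU jj h2, hnoA jj h1 h2⟩
            set w := pos move v c m with hw
            have hwspec := wstrat_spec (turn := turn) (move := move) (prio := prio)
              (hG2i w (hjG2 m (le_refl m) hmn))
            set c' := fun t => c (m + t) with hc'
            have hsh : ∀ t, pos move w c' t = pos move v c (m + t) := pos_shift move v c m
            have htail : ConsUp turn move i w (wstrat turn move prio i G2 w) c' (n - m + 1) := by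
              intro t ht hturn'
              rw [hsh t] at hturn'
              have h2 := hcons (m + t) (by omega) hturn'
              rw [hσf_at c (m+t), if_neg (hnoA (m+t) (by omega) (by omega)),
                hent_eq c m (m+t) (by omega) hmA
                  (fun jj hj1 hj2 => hnoA jj hj1 (by omega))] at h2
              rw [show c' t = c (m+t) from rfl, h2, show m + t - m = t by omega, ← hc', ← hw]
            have hres := hwspec.1 c' (n - m) htail
              (fun t ht => by rw [hsh t]; exact hjG2 (m+t) (by omega) (by omega))
              (by rw [hsh (n-m), show m + (n-m) = n by omega]; exact hturn)
            rw [hsh (n - m + 1), show m + (n - m + 1) = n + 1 by omega] at hres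
            exact hres.1
        · -- σf wins
          intro c hcons hU
          by_cases hAinf : ∀ Nb, ∃ nn, Nb ≤ nn ∧ pos move v c nn ∈ A
          · have hPpv : ∀ Nb, ∃ t, Nb ≤ t ∧ pos move v c t ∈ Pp := by
              intro Nb
              rcases hAinf Nb with ⟨nn, hnn1, hnn2⟩
              rw [hA2] at hnn2
              rcases Set.mem_iUnion.mp hnn2 with ⟨n₀, hn₀⟩
              rcases attr_reach n₀ (pos move v c nn) hn₀ (fun t => c (nn + t))
                (fun k => by rw [pos_shift move v c nn k]; exact hU (nn+k))
                (fun k hk hattr hturn => by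
                  rw [pos_shift move v c nn k] at hattr hturn ⊢
                  have h2 := hcons (nn + k) hturn
                  rw [← hA2] at hattr
                  rw [hσf_at c (nn+k), if_pos hattr] at h2
                  exact h2) with ⟨t, ht⟩
              rw [pos_shift move v c nn t] at ht
              exact ⟨nn + t, by omega, ht⟩
            have hpinf : {t | prio (pos move v c t) = p}.Infinite := by
              apply Set.infinite_of_forall_exists_gt
              intro a
              rcases hPpv (a+1) with ⟨t, ht1, ht2⟩
              exact ⟨t, ht2.2, by omega⟩
            have hpK : p ∈ {k | {t | prio (pos move v c t) = k}.Infinite} := hpinf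
            have hlow : ∀ k ∈ {k | {t | prio (pos move v c t) = k}.Infinite}, p ≤ k := by
              intro k hk
              rcases hk.nonempty with ⟨t, ht⟩
              rw [hp]
              exact Nat.sInf_le ⟨pos move v c t, (hU t).1, ht⟩
            have hminp : minInf prio (pos move v c) = p := by
              unfold minInf
              exact le_antisymm (Nat.sInf_le hpK) (hlow _ (Nat.sInf_mem ⟨p, hpK⟩))
            unfold Pay
            rw [hminp]
            exact hiEven
          · push_neg at hAinf
            rcases hAinf with ⟨Nb, hNb⟩
            set m := Nat.findGreatest (fun k => 0 < k ∧ pos move v c (k-1) ∈ A) Nb with hm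
            have hmn : m ≤ Nb := Nat.findGreatest_le Nb
            have hfacts := Nat.findGreatest_eq_iff.mp hm.symm
            have hmA : m ≠ 0 → pos move v c (m-1) ∈ A := fun h0 => (hfacts.2.1 h0).2
            have hnoA : ∀ jj, m ≤ jj → pos move v c jj ∉ A := by
              intro jj hj hjA
              rcases Nat.lt_or_ge jj Nb with hlt | hge
              · exact hfacts.2.2 (show m < jj+1 by omega) (by omega)
                  ⟨by omega, by simpa using hjA⟩
              · exact hNb jj hge hjA
            have hjG2 : ∀ jj, m ≤ jj → pos move v c jj ∈ G2 :=
              fun jj h1 => ⟨hU jj, hnoA jj h1⟩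
            set w := pos move v c m with hw
            have hwspec := wstrat_spec (turn := turn) (move := move) (prio := prio)
              (hG2i w (hjG2 m (le_refl m)))
            set c' := fun t => c (m + t) with hc'
            have hsh : ∀ t, pos move w c' t = pos move v c (m + t) := pos_shift move v c m
            have htail : Cons turn move i w (wstrat turn move prio i G2 w) c' := by
              intro t hturn'
              rw [hsh t] at hturn'
              have h2 := hcons (m + t) hturn'
              rw [hσf_at c (m+t), if_neg (hnoA (m+t) (by omega)),
                hent_eq c m (m+t) (by omega) hmA (fun jj hj1 hj2 => hnoA jj hj1)] at h2
              rw [show c' t = c (m+t) from rfl, h2, show m + t - m = t by omega, ← hc', ← hw]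
            have hpay := hwspec.2 c' htail (fun t => by rw [hsh t]; exact hjG2 (m+t) (by omega))
            have hfe : pos move w c' = fun t => pos move v c (m + t) := funext hsh
            rw [hfe] at hpay
            exact Pay_shift prio m hpay
      exact win_or turn move prio i (Or.inl (win_of_trap (fun u hu => hu.1) trap₁ hwin₁))

end Main

section Build

variable {V : Type}

/-- build the bit sequence of the play where the opponent's bits come from `Z`
(at positions `n` with `n % 2 = r`) and our bits come from strategy `σ`. -/
def buildHist (σ : Strat) (Z : ℕ → Bool) (r : ℕ) : ℕ → List Bool
  | 0 => []
  | n+1 => buildHist σ Z r n ++ [if n % 2 = r then Z (n/2) else σ (buildHist σ Z r n)]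

def buildC (σ : Strat) (Z : ℕ → Bool) (r : ℕ) (n : ℕ) : Bool :=
  if n % 2 = r then Z (n/2) else σ (buildHist σ Z r n)

theorem buildHist_eq_hist (σ : Strat) (Z : ℕ → Bool) (r : ℕ) :
    ∀ n, buildHist σ Z r n = hist (buildC σ Z r) n := by
  intro n
  induction n with
  | zero => rfl
  | succ n ih =>
    rw [show buildHist σ Z r (n+1) = buildHist σ Z r n ++
      [if n % 2 = r then Z (n/2) else σ (buildHist σ Z r n)] from rfl, ih]
    rw [hist, hist, List.range_succ, List.map_append]
    congr 1
    show [if n % 2 = r then Z (n/2) else σ (hist (buildC σ Z r) n)] = _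
    rw [← ih]
    rfl

/-- bits of the built play depend only on an initial segment of `Z`. -/
theorem buildHist_congr (σ : Strat) {Z W : ℕ → Bool} (r : ℕ) {M : ℕ}
    (h : ∀ s, 2*s + r < M → Z s = W s) :
    ∀ n ≤ M, buildHist σ Z r n = buildHist σ W r n := by
  intro n
  induction n with
  | zero => intro _; rfl
  | succ n ih =>
    intro hn
    rw [show buildHist σ Z r (n+1) = buildHist σ Z r n ++
      [if n % 2 = r then Z (n/2) else σ (buildHist σ Z r n)] from rfl]
    rw [show buildHist σ W r (n+1) = buildHist σ W r n ++
      [if n % 2 = r then W (n/2) else σ (buildHist σ W r n)] from rfl]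
    rw [ih (by omega)]
    congr 2
    by_cases hr : n % 2 = r
    · rw [if_pos hr, if_pos hr, h (n/2) (by omega)]
    · rw [if_neg hr, if_neg hr]

end Build

section Inst

variable {Q : Type} [Fintype Q]

abbrev AV (Q : Type) := ℕ × Q × Option Bool

def turnA : AV Q → Bool := fun v => v.2.2.isSome

def moveA (δ : Q → Bool × Bool × Bool → Q) (ch : ℕ → Bool) : AV Q → Bool → AV Q := fun v b =>
  match v with
  | (n, q, none) => (n, q, some b)
  | (n, q, some x) => (n+1, δ q (x, b, ch n), none)

def prioA (col : Q → ℕ) : AV Q → ℕ := fun v => col v.2.1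

variable (δ : Q → Bool × Bool × Bool → Q) (q₀ : Q) (col : Q → ℕ) (ch : ℕ → Bool)

def stateRun (c : ℕ → Bool) (n : ℕ) : Q :=
  ((List.range n).map (fun m => (c (2*m), c (2*m+1), ch m))).foldl δ q₀

theorem stateRun_succ (c : ℕ → Bool) (n : ℕ) :
    stateRun δ q₀ ch c (n+1) = δ (stateRun δ q₀ ch c n) (c (2*n), c (2*n+1), ch n) := by
  unfold stateRun
  rw [List.range_succ, List.map_append, List.foldl_append]
  rfl

theorem posA (c : ℕ → Bool) : ∀ n,
    pos (moveA δ ch) (0, q₀, none) c (2*n) = (n, stateRun δ q₀ ch c n, none) ∧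
    pos (moveA δ ch) (0, q₀, none) c (2*n+1) = (n, stateRun δ q₀ ch c n, some (c (2*n))) := by
  intro n
  induction n with
  | zero =>
    refine ⟨rfl, ?_⟩
    show moveA δ ch (pos (moveA δ ch) (0, q₀, none) c 0) (c 0) = _
    rfl
  | succ n ih =>
    have hs : pos (moveA δ ch) (0, q₀, none) c ((2*n+1)+1)
        = (n+1, stateRun δ q₀ ch c (n+1), none) := by
      show moveA δ ch (pos (moveA δ ch) (0, q₀, none) c (2*n+1)) (c (2*n+1)) = _
      rw [ih.2, stateRun_succ]
      rfl
    constructor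
    · rw [show 2*(n+1) = (2*n+1)+1 by ring, hs]
    · rw [show 2*(n+1)+1 = ((2*n+1)+1)+1 by ring]
      show moveA δ ch (pos (moveA δ ch) (0, q₀, none) c ((2*n+1)+1)) (c ((2*n+1)+1)) = _
      rw [hs]
      show (n+1, stateRun δ q₀ ch c (n+1), some (c ((2*n+1)+1))) = _
      rw [show (2*n+1)+1 = 2*(n+1) by ring]

theorem turn_posA (c : ℕ → Bool) (m : ℕ) :
    turnA (pos (moveA δ ch) ((0 : ℕ), q₀, (none : Option Bool)) c m) = decide (m % 2 = 1) := by
  have hm : m = 2 * (m/2) ∨ m = 2 * (m/2) + 1 := by omega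
  rcases hm with hm | hm
  · rw [hm, (posA δ q₀ ch c (m/2)).1]
    have h2 : (2 * (m/2)) % 2 = 0 := by omega
    simp [turnA, h2]
  · rw [hm, (posA δ q₀ ch c (m/2)).2]
    have h2 : (2 * (m/2) + 1) % 2 = 1 := by omega
    simp [turnA, h2]

theorem prio_posA (c : ℕ → Bool) (m : ℕ) :
    prioA col (pos (moveA δ ch) ((0 : ℕ), q₀, (none : Option Bool)) c m)
      = col (stateRun δ q₀ ch c (m/2)) := by
  have hm : m = 2 * (m/2) ∨ m = 2 * (m/2) + 1 := by omega
  rcases hm with hm | hm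
  · conv_lhs => rw [hm]
    rw [(posA δ q₀ ch c (m/2)).1]
    rfl
  · conv_lhs => rw [hm]
    rw [(posA δ q₀ ch c (m/2)).2]
    rfl

theorem nat_infinite_iff {Pr : ℕ → Prop} :
    {n | Pr n}.Infinite ↔ ∀ a, ∃ b, a < b ∧ Pr b := by
  constructor
  · intro h a
    rcases h.exists_gt a with ⟨b, hb, hab⟩
    exact ⟨b, hab, hb⟩
  · intro h
    apply Set.infinite_of_forall_exists_gt
    intro a
    rcases h a with ⟨b, h1, h2⟩
    exact ⟨b, h2, h1⟩

theorem accept_iff (c : ℕ → Bool) :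
    Even (sInf {k | ∃ q, {n | ((List.range (n + 1)).map
        (fun n => (c (2*n), c (2*n+1), ch n))).foldl δ q₀ = q}.Infinite ∧ col q = k})
      ↔ Even (minInf (prioA col) (pos (moveA δ ch) ((0 : ℕ), q₀, (none : Option Bool)) c)) := by
  have hrun : ∀ n, ((List.range (n + 1)).map
      (fun n => (c (2*n), c (2*n+1), ch n))).foldl δ q₀ = stateRun δ q₀ ch c (n+1) :=
    fun n => rfl
  have hset : {k | ∃ q, {n | ((List.range (n + 1)).map
        (fun n => (c (2*n), c (2*n+1), ch n))).foldl δ q₀ = q}.Infinite ∧ col q = k}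
      = {k | {m | prioA col (pos (moveA δ ch) ((0 : ℕ), q₀, (none : Option Bool)) c m)
          = k}.Infinite} := by
    ext k
    simp only [Set.mem_setOf_eq]
    constructor
    · rintro ⟨q, hq, rfl⟩
      rw [nat_infinite_iff]
      intro a
      rcases (nat_infinite_iff.mp hq) a with ⟨n, hn1, hn2⟩
      refine ⟨2*(n+1), by omega, ?_⟩
      rw [prio_posA, show 2*(n+1)/2 = n+1 by omega, ← hrun n, hn2]
    · intro hk
      have hk' : {m | col (stateRun δ q₀ ch c (m/2)) = k}.Infinite := by
        apply Set.Infinite.mono _ hk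
        intro m hm
        rw [Set.mem_setOf_eq, prio_posA] at hm
        exact hm
      have hex : ∃ q, col q = k ∧ {m | stateRun δ q₀ ch c (m/2) = q}.Infinite := by
        by_contra hcon
        push_neg at hcon
        have hsub : {m | col (stateRun δ q₀ ch c (m/2)) = k} ⊆
            ⋃ q ∈ {q : Q | col q = k}, {m | stateRun δ q₀ ch c (m/2) = q} := by
          intro m hm
          exact Set.mem_biUnion hm rfl
        have hfin : (⋃ q ∈ {q : Q | col q = k}, {m | stateRun δ q₀ ch c (m/2) = q}).Finite := by
          apply Set.Finite.biUnion (Set.toFinite _)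
          intro q hq
          exact hcon q hq
        exact (hk'.mono hsub) hfin
      rcases hex with ⟨q, hq1, hq2⟩
      refine ⟨q, ?_, hq1⟩
      rw [nat_infinite_iff]
      intro a
      rcases (nat_infinite_iff.mp hq2) (2*(a+1)+1) with ⟨m, hm1, hm2⟩
      refine ⟨m/2 - 1, by omega, ?_⟩
      rw [hrun, show m/2 - 1 + 1 = m/2 by omega]
      exact hm2
  unfold minInf
  rw [hset]

end Inst

end MD
open Classical in
/-- The characteristic ω-sequence of a set of natural numbers. -/
noncomputable def chi (P : Set ℕ) : ℕ → Bool := fun n => decide (n ∈ P)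

/-- An operator `F` between ω-sequences is *causal* (a C-operator) if
`F x t` depends only on `x 0, …, x t`. -/
def Causal {α β : Type} (F : (ℕ → α) → (ℕ → β)) : Prop :=
  ∀ x y : ℕ → α, ∀ t : ℕ, (∀ s ≤ t, x s = y s) → ∀ s ≤ t, F x s = F y s

/-- An operator `F` between ω-sequences is *strongly causal* (an SC-operator)
if `F x t` depends only on `x 0, …, x (t−1)`. -/
def StronglyCausal {α β : Type} (F : (ℕ → α) → (ℕ → β)) : Prop :=
  ∀ x y : ℕ → α, ∀ t : ℕ, (∀ s < t, x s = y s) → F x t = F y t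

/-- Acceptance by a deterministic parity automaton `(Q, δ, q₀, col)`: the
minimal color of a state visited infinitely often along the run on the
ω-word `a` is even. -/
def ParityAccepts {Q σ : Type*} (δ : Q → σ → Q) (q₀ : Q) (col : Q → ℕ)
    (a : ℕ → σ) : Prop :=
  Even (sInf {k | ∃ q, {n | ((List.range (n + 1)).map a).foldl δ q₀ = q}.Infinite ∧
    col q = k})

/-- Determinacy of McNaughton games with a parameter `P`, in automaton form:
for every finite deterministic parity automaton over `{0,1}³` defining the
relation `R_A` and every `P ⊆ ℕ`, either some causal operator `F` satisfies
`(X, F X, χ_P) ∈ R_A` for every `X`, or some strongly causal operator `G`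
satisfies `(G Y, Y, χ_P) ∉ R_A` for every `Y`. -/
theorem mcnaughton_determinacy {Q : Type} [Fintype Q]
    (δ : Q → Bool × Bool × Bool → Q) (q₀ : Q) (col : Q → ℕ) (P : Set ℕ) :
    (∃ F : (ℕ → Bool) → (ℕ → Bool), Causal F ∧
      ∀ X : ℕ → Bool, ParityAccepts δ q₀ col (fun n => (X n, F X n, chi P n))) ∨
    (∃ G : (ℕ → Bool) → (ℕ → Bool), StronglyCausal G ∧
      ∀ Y : ℕ → Bool, ¬ ParityAccepts δ q₀ col (fun n => (G Y n, Y n, chi P n))) := by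
  classical
  set ch := chi P with hch
  set tA : MD.AV Q → Bool := MD.turnA with htA
  set mA := MD.moveA δ ch with hmA
  set pA := MD.prioA col with hpA
  have hfin : (pA '' (Set.univ : Set (MD.AV Q))).Finite := by
    apply (Set.finite_range col).subset
    rintro _ ⟨v, -, rfl⟩
    exact ⟨v.2.1, rfl⟩
  have hsub : MD.Subarena mA (Set.univ : Set (MD.AV Q)) := fun v _ => ⟨false, trivial⟩
  have hdet := MD.determined tA mA pA hfin.toFinset.card Set.univ hsub hfin (le_refl _)
    ((0 : ℕ), q₀, (none : Option Bool)) (Set.mem_univ _)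
  rcases hdet with hW | hW
  · -- player II (second component) wins: causal operator F
    left
    rcases hW with ⟨-, σ, -, hwin⟩
    refine ⟨fun X n => MD.buildC σ X 0 (2*n+1), ?_, ?_⟩
    · intro X Y t h s hs
      have h' : ∀ s', 2*s' + 0 < 2*t + 2 → X s' = Y s' := fun s' hs' => h s' (by omega)
      show MD.buildC σ X 0 (2*s+1) = MD.buildC σ Y 0 (2*s+1)
      unfold MD.buildC
      rw [if_neg (by omega), if_neg (by omega),
        MD.buildHist_congr σ 0 h' (2*s+1) (by omega)]
    · intro X
      set c := MD.buildC σ X 0 with hc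
      have hc0 : ∀ n, c (2*n) = X n := by
        intro n
        rw [hc]
        unfold MD.buildC
        rw [if_pos (by omega), show 2*n/2 = n by omega]
      have hc1 : ∀ n, c (2*n+1) = (fun X n => MD.buildC σ X 0 (2*n+1)) X n := fun n => rfl
      have hcons : MD.Cons tA mA true ((0 : ℕ), q₀, (none : Option Bool)) σ c := by
        intro n hturn
        rw [htA, hmA, MD.turn_posA] at hturn
        have hodd := of_decide_eq_true hturn
        rw [hc]
        unfold MD.buildC
        rw [if_neg (by omega), MD.buildHist_eq_hist]
        rfl
      have hpay := hwin c hcons (fun _ => trivial)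
      have heven : Even (MD.minInf pA (MD.pos mA ((0 : ℕ), q₀, (none : Option Bool)) c)) :=
        hpay.mpr rfl
      have hletters : (fun n => (X n, MD.buildC σ X 0 (2*n+1), chi P n))
          = fun n => (c (2*n), c (2*n+1), ch n) := by
        funext n
        rw [← hc0 n, hc1 n, hch]
      unfold ParityAccepts
      rw [hletters]
      exact (MD.accept_iff δ q₀ col ch c).mpr heven
  · -- player I (first component) wins: strongly causal operator G
    right
    rcases hW with ⟨-, σ, -, hwin⟩
    refine ⟨fun Y n => MD.buildC σ Y 1 (2*n), ?_, ?_⟩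
    · intro Y Z t h
      have h' : ∀ s', 2*s' + 1 < 2*t → Y s' = Z s' := fun s' hs' => h s' (by omega)
      show MD.buildC σ Y 1 (2*t) = MD.buildC σ Z 1 (2*t)
      unfold MD.buildC
      rw [if_neg (by omega), if_neg (by omega),
        MD.buildHist_congr σ 1 h' (2*t) (le_refl _)]
    · intro Y hacc
      set c := MD.buildC σ Y 1 with hc
      have hc1 : ∀ n, c (2*n+1) = Y n := by
        intro n
        rw [hc]
        unfold MD.buildC
        rw [if_pos (by omega), show (2*n+1)/2 = n by omega]
      have hc0 : ∀ n, c (2*n) = (fun Y n => MD.buildC σ Y 1 (2*n)) Y n := fun n => rfl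
      have hcons : MD.Cons tA mA false ((0 : ℕ), q₀, (none : Option Bool)) σ c := by
        intro n hturn
        rw [htA, hmA, MD.turn_posA] at hturn
        have heq := of_decide_eq_false hturn
        rw [hc]
        unfold MD.buildC
        rw [if_neg (by omega), MD.buildHist_eq_hist]
        rfl
      have hpay := hwin c hcons (fun _ => trivial)
      have hneven : ¬ Even (MD.minInf pA (MD.pos mA ((0 : ℕ), q₀, (none : Option Bool)) c)) :=
        fun h => by simpa using hpay.mp h
      have hletters : (fun n => (MD.buildC σ Y 1 (2*n), Y n, chi P n))
          = fun n => (c (2*n), c (2*n+1), ch n) := by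
        funext n
        rw [← hc1 n, hc0 n, hch]
      unfold ParityAccepts at hacc
      rw [hletters] at hacc
      exact hneven ((MD.accept_iff δ q₀ col ch c).mp hacc)
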